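/- Suppose Z₋ < Z₊ are rest points of V (V′(Z₋) = V′(Z₊) = 0) with V(Z₋) = V(Z₊), V(z) < V(Z₋) for all z strictly between Z₋ and Z₊, and V″(Z₋) < 0, V″(Z₊) < 0. Then every solution ζ of ζ″ + V′(ζ) = 0 with ζ(x) → Z₋ as x → −∞ and ζ(x) → Z₊ as x → +∞ satisfies Z₋ < ζ(x) < Z₊ and ζ′(x) > 0 for every x ∈ ℝ; in particular ζ is strictly increasing. -/

import Mathlib

open Filter

open Set

lemma deriv_facts (V : ℝ → ℝ) (hV : ContDiff ℝ 2 V) :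
    Differentiable ℝ V ∧ Differentiable ℝ (deriv V) ∧ Continuous (deriv (deriv V)) := by
  have h : ContDiff ℝ (1+1) V := by norm_num; exact hV
  rw [contDiff_succ_iff_deriv] at h
  have h1 : ContDiff ℝ 1 (deriv V) := h.2.2
  exact ⟨h.1, h1.differentiable one_ne_zero, (contDiff_one_iff_deriv.mp h1).2⟩

lemma quad_bound (V : ℝ → ℝ) (hV : ContDiff ℝ 2 V) (Z : ℝ) (hZ : deriv V Z = 0) :
    ∃ M : ℝ, 0 ≤ M ∧ ∀ z, |z - Z| ≤ 1 → V Z - V z ≤ M * (z - Z)^2 := by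
  obtain ⟨hVd, hV'd, hV''c⟩ := deriv_facts V hV
  obtain ⟨C, hC⟩ := (isCompact_Icc (a := Z - 1) (b := Z + 1)).exists_bound_of_continuousOn
    hV''c.continuousOn
  refine ⟨max C 0, le_max_right _ _, fun z hz => ?_⟩
  have hZmem : Z ∈ Icc (Z-1) (Z+1) := by constructor <;> linarith
  have hzmem : z ∈ Icc (Z-1) (Z+1) := by
    rw [abs_le] at hz; constructor <;> linarith [hz.1, hz.2]
  -- step 1 : |deriv V ξ| ≤ M * |ξ - Z| on the interval
  have step1 : ∀ ξ ∈ Icc (Z-1) (Z+1), |deriv V ξ| ≤ max C 0 * |ξ - Z| := by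
    intro ξ hξ
    have := Convex.norm_image_sub_le_of_norm_hasDerivWithin_le
      (f := deriv V) (f' := deriv (deriv V)) (s := Icc (Z-1) (Z+1)) (C := max C 0)
      (fun x hx => (hV'd x).hasDerivAt.hasDerivWithinAt)
      (fun x hx => le_trans (hC x hx) (le_max_left _ _)) (convex_Icc _ _) hZmem hξ
    simpa [hZ, Real.norm_eq_abs] using this
  -- |ξ - Z| ≤ |z - Z| for ξ ∈ uIcc Z z
  have hsub : uIcc Z z ⊆ Icc (Z-1) (Z+1) := by
    intro ξ hξ
    rcases le_total Z z with h | h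
    · rw [uIcc_of_le h] at hξ
      exact ⟨by linarith [hξ.1, hZmem.1], by linarith [hξ.2, hzmem.2]⟩
    · rw [uIcc_of_ge h] at hξ
      exact ⟨by linarith [hξ.1, hzmem.1], by linarith [hξ.2, hZmem.2]⟩
  have key : ∀ ξ ∈ uIcc Z z, |deriv V ξ| ≤ max C 0 * |z - Z| := by
    intro ξ hξ
    have h1 : |ξ - Z| ≤ |z - Z| := by
      rcases le_total Z z with h | h
      · rw [uIcc_of_le h] at hξ
        rw [abs_of_nonneg (by linarith [hξ.1]), abs_of_nonneg (by linarith)]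
        linarith [hξ.2]
      · rw [uIcc_of_ge h] at hξ
        rw [abs_of_nonpos (by linarith [hξ.2]), abs_of_nonpos (by linarith)]
        linarith [hξ.1]
    calc |deriv V ξ| ≤ max C 0 * |ξ - Z| := step1 ξ (hsub hξ)
      _ ≤ max C 0 * |z - Z| := by
          exact mul_le_mul_of_nonneg_left h1 (le_max_right _ _)
  have := Convex.norm_image_sub_le_of_norm_hasDerivWithin_le
    (f := V) (f' := deriv V) (s := uIcc Z z) (C := max C 0 * |z - Z|)
    (fun x hx => (hVd x).hasDerivAt.hasDerivWithinAt)
    (fun x hx => by simpa using key x hx) (convex_uIcc _ _)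
    left_mem_uIcc right_mem_uIcc
  rw [Real.norm_eq_abs, Real.norm_eq_abs] at this
  have h2 : V Z - V z ≤ |V z - V Z| := by
    rw [abs_sub_comm]; exact le_abs_self _
  have h3 : |z - Z| * |z - Z| = (z - Z)^2 := by
    rw [← abs_mul, abs_of_nonneg (mul_self_nonneg _)]; ring
  rw [mul_assoc, h3] at this
  linarith

lemma gronwall_zero (g g' : ℝ → ℝ) (a b K : ℝ)
    (hg : ∀ x, HasDerivAt g (g' x) x) (ha : g a = 0)
    (hb : ∀ x ∈ Icc a b, |g' x| ≤ K * |g x|) :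
    ∀ x ∈ Icc a b, g x = 0 := by
  intro x hx
  have h := norm_le_gronwallBound_of_norm_deriv_right_le (f := g) (f' := g')
    (δ := 0) (K := K) (ε := 0) (a := a) (b := b)
    (fun y _ => (hg y).continuousAt.continuousWithinAt)
    (fun y _ => (hg y).hasDerivWithinAt)
    (by simp [ha])
    (fun y hy => by
      rw [Real.norm_eq_abs, Real.norm_eq_abs, add_zero]
      exact hb y (Ico_subset_Icc_self hy))
    x hx
  rw [gronwallBound_ε0_δ0] at h
  exact norm_le_zero_iff.mp h

lemma touch_const (V ζ : ℝ → ℝ) (hV : ContDiff ℝ 2 V) (hζd : Differentiable ℝ ζ)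
    (Z : ℝ) (hZ : deriv V Z = 0)
    (hE : ∀ x, (deriv ζ x)^2 = 2 * (V Z - V (ζ x)))
    (x₁ : ℝ) (hx₁ : ζ x₁ = Z) : ∀ x, ζ x = Z := by
  obtain ⟨M, hM0, hM⟩ := quad_bound V hV Z hZ
  set K : ℝ := 2 * Real.sqrt (2 * M) with hK
  set g : ℝ → ℝ := fun x => (ζ x - Z)^2 with hgdef
  set g' : ℝ → ℝ := fun x => 2 * (ζ x - Z) * deriv ζ x with hg'def
  have hg : ∀ x, HasDerivAt g (g' x) x := by
    intro x
    have h := ((hζd x).hasDerivAt.sub_const Z).fun_pow 2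
    refine h.congr_deriv ?_
    simp only [hg'def]
    push_cast
    ring
  have hbound : ∀ x, |ζ x - Z| ≤ 1 → |g' x| ≤ K * |g x| := by
    intro x hx
    have h1 : (deriv ζ x)^2 ≤ 2 * M * (ζ x - Z)^2 := by
      have h2 := hM (ζ x) hx
      have h3 := hE x
      nlinarith
    have h2 : |deriv ζ x| ≤ Real.sqrt (2 * M) * |ζ x - Z| := by
      calc |deriv ζ x| = Real.sqrt ((deriv ζ x)^2) := (Real.sqrt_sq_eq_abs _).symm
        _ ≤ Real.sqrt (2 * M * (ζ x - Z)^2) := Real.sqrt_le_sqrt h1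
        _ = Real.sqrt (2 * M) * |ζ x - Z| := by
            rw [Real.sqrt_mul (by positivity), Real.sqrt_sq_eq_abs]
    have h3 : |g x| = |ζ x - Z| * |ζ x - Z| := by
      simp only [hgdef]
      rw [sq, abs_mul]
    have h4 : |g' x| = 2 * |ζ x - Z| * |deriv ζ x| := by
      simp only [hg'def]
      rw [abs_mul, abs_mul]
      simp [abs_of_nonneg]
    rw [h3, h4, hK]
    nlinarith [abs_nonneg (ζ x - Z), abs_nonneg (deriv ζ x), Real.sqrt_nonneg (2*M)]
  -- clopen argument
  set S : Set ℝ := {x | ζ x = Z} with hS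
  have hclosed : IsClosed S := isClosed_eq hζd.continuous continuous_const
  have hopen : IsOpen S := by
    rw [Metric.isOpen_iff]
    intro x₀ hx₀
    have hx₀' : ζ x₀ = Z := hx₀
    have hcont : Tendsto (fun x => |ζ x - Z|) (nhds x₀) (nhds 0) := by
      have : Tendsto ζ (nhds x₀) (nhds Z) := by
        have h := hζd.continuous.continuousAt (x := x₀)
        rw [ContinuousAt, hx₀'] at h
        exact h
      have h := (this.sub_const Z).abs
      simpa using h
    have hev : ∀ᶠ x in nhds x₀, |ζ x - Z| < 1 :=
      hcont.eventually_lt_const one_pos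
    obtain ⟨ε, hε, hball⟩ := Metric.eventually_nhds_iff.mp hev
    set δ : ℝ := ε / 2 with hδ
    have hδ0 : 0 < δ := by positivity
    have hin : ∀ x ∈ Icc (x₀ - δ) (x₀ + δ), |ζ x - Z| ≤ 1 := by
      intro x hx
      refine le_of_lt (hball ?_)
      rw [Real.dist_eq, abs_lt]
      constructor <;> linarith [hx.1, hx.2, hδ]
    -- forward
    have hfwd : ∀ x ∈ Icc x₀ (x₀ + δ), g x = 0 := by
      apply gronwall_zero g g' x₀ (x₀ + δ) K hg (by simp [hgdef, hx₀'])
      intro x hx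
      exact hbound x (hin x ⟨by linarith [hx.1], hx.2⟩)
    -- backward
    have hbwd : ∀ x ∈ Icc (x₀ - δ) x₀, g x = 0 := by
      have hG : ∀ x, HasDerivAt (fun y => g (2 * x₀ - y)) (g' (2 * x₀ - x) * (-1)) x := by
        intro x
        exact (hg (2 * x₀ - x)).comp x (((hasDerivAt_id x).const_sub (2 * x₀)))
      have h := gronwall_zero (fun y => g (2 * x₀ - y)) (fun y => g' (2 * x₀ - y) * (-1))
        x₀ (x₀ + δ) K hG (by rw [show 2 * x₀ - x₀ = x₀ by ring]; simp [hgdef, hx₀'])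
        (fun x hx => by
          rw [abs_mul, abs_neg, abs_one, mul_one]
          exact hbound _ (hin _ ⟨by linarith [hx.2], by linarith [hx.1]⟩))
      intro x hx
      have := h (2 * x₀ - x) ⟨by linarith [hx.2], by linarith [hx.1]⟩
      simpa [show 2 * x₀ - (2 * x₀ - x) = x by ring] using this
    refine ⟨δ, hδ0, fun x hx => ?_⟩
    rw [Metric.mem_ball, Real.dist_eq] at hx
    have hgx : g x = 0 := by
      rcases le_total x x₀ with h | h
      · exact hbwd x ⟨by obtain ⟨h1, h2⟩ := abs_lt.mp hx; linarith, h⟩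
      · exact hfwd x ⟨h, by obtain ⟨h1, h2⟩ := abs_lt.mp hx; linarith⟩
    have : ζ x - Z = 0 := by
      have := pow_eq_zero_iff (n := 2) (by norm_num) |>.mp hgx
      exact this
    simp only [hS, mem_setOf_eq]
    linarith
  have huniv : S = univ := IsClopen.eq_univ ⟨hclosed, hopen⟩ ⟨x₁, hx₁⟩
  intro x
  have : x ∈ S := huniv ▸ mem_univ x
  exact this

/-- **Monotonicity of heteroclinic fronts.** Under the conjugacy and nondegeneracy
conditions, every heteroclinic solution of `ζ″ + V′(ζ) = 0` from `Z₋` to `Z₊` stays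
strictly between the rest points and is strictly increasing with `ζ′ > 0` everywhere. -/
theorem heteroclinic_monotone (V : ℝ → ℝ) (hV : ContDiff ℝ 2 V)
    (Zm Zp : ℝ) (hlt : Zm < Zp)
    (hrest_m : deriv V Zm = 0) (hrest_p : deriv V Zp = 0)
    (hconj : V Zm = V Zp)
    (hhetero : ∀ z, Zm < z → z < Zp → V z < V Zm)
    (hspec_m : deriv (deriv V) Zm < 0) (hspec_p : deriv (deriv V) Zp < 0)
    (ζ : ℝ → ℝ) (hζ : ContDiff ℝ 2 ζ)
    (hode : ∀ x : ℝ, deriv (deriv ζ) x + deriv V (ζ x) = 0)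
    (hbot : Tendsto ζ atBot (nhds Zm)) (htop : Tendsto ζ atTop (nhds Zp)) :
    (∀ x : ℝ, Zm < ζ x ∧ ζ x < Zp ∧ 0 < deriv ζ x) ∧ StrictMono ζ := by
  obtain ⟨hVd, hV'd, hV''c⟩ := deriv_facts V hV
  obtain ⟨hζd, hζ'd, hζ''c⟩ := deriv_facts ζ hζ
  have hζ'c : Continuous (deriv ζ) := hζ'd.continuous
  -- energy is constant
  set E : ℝ → ℝ := fun x => (deriv ζ x)^2 + 2 * V (ζ x) with hEdef
  have hEderiv : ∀ x, HasDerivAt E 0 x := by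
    intro x
    have h1 : HasDerivAt (fun y => (deriv ζ y)^2) (2 * deriv ζ x * deriv (deriv ζ) x) x := by
      have := (hζ'd x).hasDerivAt.fun_pow 2
      refine this.congr_deriv ?_
      push_cast; ring
    have h2 : HasDerivAt (fun y => V (ζ y)) (deriv V (ζ x) * deriv ζ x) x :=
      (hVd (ζ x)).hasDerivAt.comp x (hζd x).hasDerivAt
    have h3 := h1.add (h2.const_mul 2)
    refine h3.congr_deriv ?_
    have h4 := hode x
    linear_combination (2 * deriv ζ x) * h4
  have hEconst : ∀ x, E x = E 0 := fun x =>
    is_const_of_deriv_eq_zero (fun y => (hEderiv y).differentiableAt)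
      (fun y => (hEderiv y).deriv) x 0
  -- energy equals 2 V Zm via a sequence going to -∞
  have hmvt : ∀ n : ℕ, ∃ c ∈ Ioo (-(n:ℝ) - 1) (-(n:ℝ)),
      deriv ζ c = (ζ (-(n:ℝ)) - ζ (-(n:ℝ) - 1)) / ((-(n:ℝ)) - (-(n:ℝ) - 1)) := by
    intro n
    exact exists_hasDerivAt_eq_slope ζ (deriv ζ) (by linarith)
      hζd.continuous.continuousOn (fun x _ => (hζd x).hasDerivAt)
  choose ξ hξmem hξslope using hmvt
  have hξbot : Tendsto ξ atTop atBot := by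
    apply tendsto_atBot_mono (fun n => (hξmem n).2.le)
    exact tendsto_neg_atBot_iff.mpr tendsto_natCast_atTop_atTop
  have hn1 : Tendsto (fun n : ℕ => ζ (-(n:ℝ))) atTop (nhds Zm) :=
    hbot.comp (tendsto_neg_atBot_iff.mpr tendsto_natCast_atTop_atTop)
  have hn2 : Tendsto (fun n : ℕ => ζ (-(n:ℝ) - 1)) atTop (nhds Zm) := by
    apply hbot.comp
    apply tendsto_atBot_add_const_right
    exact tendsto_neg_atBot_iff.mpr tendsto_natCast_atTop_atTop
  have hslope0 : Tendsto (fun n => deriv ζ (ξ n)) atTop (nhds 0) := by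
    have heq : ∀ n : ℕ, deriv ζ (ξ n) = ζ (-(n:ℝ)) - ζ (-(n:ℝ) - 1) := by
      intro n
      rw [hξslope n]
      have : (-(n:ℝ)) - (-(n:ℝ) - 1) = 1 := by ring
      rw [this, div_one]
    simp only [heq]
    simpa using hn1.sub hn2
  have hEξ : Tendsto (fun n => E (ξ n)) atTop (nhds (2 * V Zm)) := by
    have h1 : Tendsto (fun n => (deriv ζ (ξ n))^2) atTop (nhds 0) := by
      simpa using hslope0.pow 2
    have h2 : Tendsto (fun n => V (ζ (ξ n))) atTop (nhds (V Zm)) :=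
      (hVd.continuous.tendsto Zm).comp (hbot.comp hξbot)
    have := h1.add (h2.const_mul 2)
    simpa using this
  have hE0 : E 0 = 2 * V Zm := by
    have hconst : Tendsto (fun n => E (ξ n)) atTop (nhds (E 0)) := by
      simp only [hEconst]
      exact tendsto_const_nhds
    exact tendsto_nhds_unique hconst hEξ
  have hEm : ∀ x, (deriv ζ x)^2 = 2 * (V Zm - V (ζ x)) := by
    intro x
    have := (hEconst x).trans hE0
    simp only [hEdef] at this
    linarith
  have hEp : ∀ x, (deriv ζ x)^2 = 2 * (V Zp - V (ζ x)) := by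
    intro x; rw [hEm x, hconj]
  -- ζ never touches the rest points
  have hne_p : ∀ x, ζ x ≠ Zp := by
    intro x hx
    have hall := touch_const V ζ hV hζd Zp hrest_p hEp x hx
    have : Tendsto ζ atBot (nhds Zp) := by
      have : ζ = fun _ => Zp := funext hall
      rw [this]; exact tendsto_const_nhds
    exact absurd (tendsto_nhds_unique hbot this) hlt.ne
  have hne_m : ∀ x, ζ x ≠ Zm := by
    intro x hx
    have hall := touch_const V ζ hV hζd Zm hrest_m hEm x hx
    have : Tendsto ζ atTop (nhds Zm) := by
      have : ζ = fun _ => Zm := funext hall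
      rw [this]; exact tendsto_const_nhds
    exact absurd (tendsto_nhds_unique htop this) hlt.ne'
  -- strict bounds
  have hub : ∀ x, ζ x < Zp := by
    obtain ⟨a, ha⟩ := (hbot.eventually_lt_const hlt).exists
    intro x
    rcases lt_or_ge (ζ x) Zp with h | h
    · exact h
    · exfalso
      have hmem : Zp ∈ uIcc (ζ a) (ζ x) := by
        rw [Set.mem_uIcc]; left; exact ⟨ha.le, h⟩
      obtain ⟨y, _, hy⟩ := intermediate_value_uIcc hζd.continuous.continuousOn hmem
      exact hne_p y hy
  have hlb : ∀ x, Zm < ζ x := by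
    obtain ⟨a, ha⟩ := (htop.eventually_const_lt hlt).exists
    intro x
    rcases lt_or_ge Zm (ζ x) with h | h
    · exact h
    · exfalso
      have hmem : Zm ∈ uIcc (ζ x) (ζ a) := by
        rw [Set.mem_uIcc]; left; exact ⟨h, ha.le⟩
      obtain ⟨y, _, hy⟩ := intermediate_value_uIcc hζd.continuous.continuousOn hmem
      exact hne_m y hy
  -- deriv never vanishes
  have hd'ne : ∀ x, deriv ζ x ≠ 0 := by
    intro x hx
    have h1 := hhetero (ζ x) (hlb x) (hub x)
    have h2 := hEm x
    rw [hx] at h2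
    nlinarith
  -- deriv positive somewhere
  have hm : Zm < (Zm + Zp) / 2 := by linarith
  have hm' : (Zm + Zp) / 2 < Zp := by linarith
  obtain ⟨A, hA⟩ := eventually_atBot.mp (hbot.eventually_lt_const hm)
  obtain ⟨B, hB⟩ := eventually_atTop.mp (htop.eventually_const_lt hm')
  set a : ℝ := min A (B - 1) with hadef
  set b : ℝ := max B (A + 1) with hbdef
  have hab : a < b := by
    have h1 : a ≤ B - 1 := min_le_right _ _
    have h2 : B ≤ b := le_max_left _ _
    linarith
  have hζa : ζ a < (Zm + Zp) / 2 := hA a (min_le_left _ _)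
  have hζb : (Zm + Zp) / 2 < ζ b := hB b (le_max_left _ _)
  obtain ⟨c, _, hc⟩ := exists_hasDerivAt_eq_slope ζ (deriv ζ) hab
    hζd.continuous.continuousOn (fun x _ => (hζd x).hasDerivAt)
  have hcpos : 0 < deriv ζ c := by
    rw [hc]
    apply div_pos (by linarith) (by linarith)
  -- deriv positive everywhere
  have hd'pos : ∀ x, 0 < deriv ζ x := by
    intro x
    rcases lt_or_ge 0 (deriv ζ x) with h | h
    · exact h
    · exfalso
      have hmem : (0:ℝ) ∈ uIcc (deriv ζ x) (deriv ζ c) := by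
        rw [Set.mem_uIcc]; left; exact ⟨h, hcpos.le⟩
      obtain ⟨y, _, hy⟩ := intermediate_value_uIcc hζ'c.continuousOn hmem
      exact hd'ne y hy
  exact ⟨fun x => ⟨hlb x, hub x, hd'pos x⟩, strictMono_of_deriv_pos hd'pos⟩
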